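/- arXiv:1702.08890 — 2 statements merged into one kernel-verified Lean document; each statement's English description precedes it below -/
import Mathlib

section
/- Let X ⊂ P^n be a hypersurface of degree 6 and C ⊂ X a smooth conic. Then there exists a point x ∈ C such that C ⊂ T_xX. -/
open MvPolynomial Module

noncomputable section

/-- Complex affine space with index set `ι`, carrying the Zariski topology. -/
def MAff (ι : Type) : Type := ι → ℂ

instance (ι : Type) : TopologicalSpace (MAff ι) :=
  TopologicalSpace.generateFrom
    {U : Set (MAff ι) | ∃ f : MvPolynomial ι ℂ,
      U = {x : MAff ι | MvPolynomial.eval (x : ι → ℂ) f ≠ 0}}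

/-- The vector space `ℂ^{n+1}` underlying `ℙ^n`. -/
abbrev Vn (n : ℕ) : Type := Fin (n + 1) → ℂ

/-- Complex projective `n`-space. -/
def Pr (n : ℕ) : Type := Projectivization ℂ (Vn n)

/-- A chosen representative vector of a projective point. -/
def prRep {n : ℕ} (p : Pr n) : Vn n :=
  Projectivization.rep (show Projectivization ℂ (Vn n) from p)

/-- The Zariski topology on `ℙ^n`, generated by non-vanishing loci of
homogeneous polynomials. -/
instance (n : ℕ) : TopologicalSpace (Pr n) :=
  TopologicalSpace.generateFrom
    {U : Set (Pr n) | ∃ (e : ℕ) (f : MvPolynomial (Fin (n + 1)) ℂ), f.IsHomogeneous e ∧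
      U = {p : Pr n | MvPolynomial.eval (prRep p) f ≠ 0}}

/-- The projective zero locus of a (homogeneous) polynomial. -/
def projZeros {n : ℕ} (F : MvPolynomial (Fin (n + 1)) ℂ) : Set (Pr n) :=
  {p | MvPolynomial.eval (prRep p) F = 0}

/-- Smoothness of the hypersurface `V(F)`: the partial derivatives of `F`
have no common zero besides the origin. -/
def IsSmoothHyp {n : ℕ} (F : MvPolynomial (Fin (n + 1)) ℂ) : Prop :=
  ∀ v : Vn n, v ≠ 0 → ∃ i, MvPolynomial.eval v (MvPolynomial.pderiv i F) ≠ 0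

/-- The linear subspace of `ℂ^{n+1}` cut out by the differential of `F` at `x`. -/
def tangentSub {n : ℕ} (F : MvPolynomial (Fin (n + 1)) ℂ) (x : Pr n) : Submodule ℂ (Vn n) :=
  LinearMap.ker (∑ i : Fin (n + 1),
    MvPolynomial.eval (prRep x) (MvPolynomial.pderiv i F) • (LinearMap.proj i : Vn n →ₗ[ℂ] ℂ))

/-- The linear subvariety of `ℙ^n` corresponding to a linear subspace of `ℂ^{n+1}`. -/
def projSub {n : ℕ} (W : Submodule ℂ (Vn n)) : Set (Pr n) := {p | prRep p ∈ W}

/-- The embedded (projective) tangent space `T_x X` of the hypersurface `X = V(F)` at `x`. -/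
def embTangent {n : ℕ} (F : MvPolynomial (Fin (n + 1)) ℂ) (x : Pr n) : Set (Pr n) :=
  projSub (tangentSub F x)

/-- The linear subspace of `ℂ^{n+1}` spanned by (the cone over) a subset of `ℙ^n`. -/
def spanSub {n : ℕ} (S : Set (Pr n)) : Submodule ℂ (Vn n) :=
  Submodule.span ℂ (prRep '' S)

/-- The linear span `⟨S⟩ ⊂ ℙ^n` of a subset `S ⊂ ℙ^n`. -/
def linSpan {n : ℕ} (S : Set (Pr n)) : Set (Pr n) := projSub (spanSub S)

/-- The cone over `B` with vertex `x`: closure of the union of lines `⟨x,b⟩`, `b ∈ B`. -/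
def ConePt {n : ℕ} (x : Pr n) (B : Set (Pr n)) : Set (Pr n) :=
  closure {p | ∃ b ∈ B, prRep p ∈ Submodule.span ℂ {prRep x, prRep b}}

/-- The dimension of a subset of a (Zariski) topological space, as the
topological Krull dimension of the subspace. -/
def dimS {T : Type} [TopologicalSpace T] (S : Set T) : WithBot ℕ∞ :=
  topologicalKrullDim ↥S

/-- The degree of a subvariety `Y ⊂ ℙ^n`: the largest finite number of points in
an intersection of `Y` with a linear subvariety. -/
def degSet {n : ℕ} (Y : Set (Pr n)) : ℕ :=
  sSup {m : ℕ | ∃ W : Submodule ℂ (Vn n),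
    (Y ∩ projSub W).Finite ∧ (Y ∩ projSub W).ncard = m}

/-- The Zariski tangent space of `Y ⊆ ℙ^n` at `p` (cut out by all homogeneous
polynomials vanishing on `Y`). -/
def idealTangent {n : ℕ} (Y : Set (Pr n)) (p : Pr n) : Submodule ℂ (Vn n) :=
  ⨅ f ∈ {f : MvPolynomial (Fin (n + 1)) ℂ |
      (∃ e, f.IsHomogeneous e) ∧ ∀ q ∈ Y, MvPolynomial.eval (prRep q) f = 0},
    tangentSub f p

/-- The singular locus of `Y ⊆ ℙ^n`: the points where the embedded tangent space
is bigger than the dimension of `Y`. -/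
def SingSet {n : ℕ} (Y : Set (Pr n)) : Set (Pr n) :=
  {p | p ∈ Y ∧ ((finrank ℂ (idealTangent Y p) : WithBot ℕ∞) ≠ dimS Y + 1)}

/-- The smooth conic in `ℙ^n` parametrized by `[s:t] ↦ [s² v₀ + st v₁ + t² v₂]`. -/
def conicOf {n : ℕ} (v : Fin 3 → Vn n) : Set (Pr n) :=
  {p | ∃ s t : ℂ, ¬ (s = 0 ∧ t = 0) ∧ ∃ c : ℂ, c ≠ 0 ∧
    prRep p = c • (s ^ 2 • v 0 + (s * t) • v 1 + t ^ 2 • v 2)}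

/-- A subset of `ℙ^n` is a smooth conic if it is the image of a degree-2
Veronese parametrization by a linearly independent triple of vectors. -/
def IsSmoothConic {n : ℕ} (C : Set (Pr n)) : Prop :=
  ∃ v : Fin 3 → Vn n, LinearIndependent ℂ v ∧ C = conicOf v

/-- The affine parameter space for conics. -/
abbrev CPAmb (n : ℕ) : Type := MAff (Fin 3 × Fin (n + 1))

/-- The rows of a parameter point. -/
def rowOf {n : ℕ} (v : CPAmb n) : Fin 3 → Vn n := fun i j => v (i, j)

/-- Parameters of smooth conics: linearly independent triples. -/
def CParam (n : ℕ) : Type := {v : CPAmb n // LinearIndependent ℂ (rowOf v)}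

instance (n : ℕ) : TopologicalSpace (CParam n) :=
  inferInstanceAs (TopologicalSpace {v : CPAmb n // LinearIndependent ℂ (rowOf v)})

/-- Two parameters are equivalent iff they cut out the same conic. -/
def conicSetoid (n : ℕ) : Setoid (CParam n) :=
  ⟨fun a b => conicOf (rowOf a.1) = conicOf (rowOf b.1),
    ⟨fun _ => rfl, fun h => h.symm, fun h1 h2 => h1.trans h2⟩⟩

/-- The space of smooth conics in `ℙ^n`, with its (quotient Zariski) topology. -/
def Conic (n : ℕ) : Type := Quotient (conicSetoid n)

instance (n : ℕ) : TopologicalSpace (Conic n) :=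
  inferInstanceAs (TopologicalSpace (Quotient (conicSetoid n)))

/-- The underlying subset of `ℙ^n` of a conic. -/
def Conic.toSet {n : ℕ} : Conic n → Set (Pr n) :=
  Quotient.lift (fun v : CParam n => conicOf (rowOf v.1)) (fun _ _ h => h)

/-- `R_2(X)`: the space of smooth conics lying in `X`. -/
def R2set {n : ℕ} (X : Set (Pr n)) : Set (Conic n) := {c | Conic.toSet c ⊆ X}

/-- `Loc A`: the closure of the locus swept out by a family of conics `A`. -/
def Loc {n : ℕ} (A : Set (Conic n)) : Set (Pr n) :=
  closure (⋃ c ∈ A, Conic.toSet c)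

/-- `R` is an irreducible component of `S`: a maximal irreducible subset of `S`. -/
def IsCompOf {T : Type} [TopologicalSpace T] (R S : Set T) : Prop :=
  R ⊆ S ∧ IsIrreducible R ∧ ∀ A : Set T, A ⊆ S → IsIrreducible A → R ⊆ A → A = R

/-- `P` holds for a general point of `S`: it holds on a nonempty (hence, for
irreducible `S`, dense) relatively open subset of `S`. -/
def ForGeneral {T : Type} [TopologicalSpace T] (S : Set T) (P : T → Prop) : Prop :=
  ∃ O : Set T, IsOpen O ∧ (S ∩ O).Nonempty ∧ ∀ x ∈ S ∩ O, P x

/-- `ℙ^n × ℙ^n` with the Zariski topology generated by non-vanishing loci of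
bihomogeneous polynomials. -/
def Pr2 (n : ℕ) : Type := Pr n × Pr n

instance (n : ℕ) : TopologicalSpace (Pr2 n) :=
  TopologicalSpace.generateFrom
    {U : Set (Pr2 n) | ∃ (de : ℕ × ℕ) (f : MvPolynomial (Fin (n + 1) ⊕ Fin (n + 1)) ℂ),
      f.IsWeightedHomogeneous (Sum.elim (fun _ => ((1 : ℕ), (0 : ℕ))) fun _ => (0, 1)) de ∧
      U = {q : Pr2 n | MvPolynomial.eval (Sum.elim (prRep q.1) (prRep q.2)) f ≠ 0}}

/-- `ℙ^n × ℙ^n × ℙ^n` with the Zariski topology generated by non-vanishing loci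
of trihomogeneous polynomials. -/
def Pr3 (n : ℕ) : Type := Pr n × Pr n × Pr n

instance (n : ℕ) : TopologicalSpace (Pr3 n) :=
  TopologicalSpace.generateFrom
    {U : Set (Pr3 n) | ∃ (de : ℕ × ℕ × ℕ)
        (f : MvPolynomial (Fin (n + 1) ⊕ (Fin (n + 1) ⊕ Fin (n + 1))) ℂ),
      f.IsWeightedHomogeneous
        (Sum.elim (fun _ => ((1 : ℕ), (0 : ℕ), (0 : ℕ)))
          (Sum.elim (fun _ => (0, 1, 0)) fun _ => (0, 0, 1))) de ∧
      U = {q : Pr3 n |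
        MvPolynomial.eval (Sum.elim (prRep q.1) (Sum.elim (prRep q.2.1) (prRep q.2.2))) f ≠ 0}}

/-- The affine parameter space for a conic together with `k` marked points on it
(each marked point is given by parameters `(s,t)` on the conic). -/
def PSp (n k : ℕ) : Type := MAff ((Fin 3 × Fin (n + 1)) ⊕ (Fin k × Fin 2))

instance (n k : ℕ) : TopologicalSpace (PSp n k) :=
  inferInstanceAs (TopologicalSpace (MAff ((Fin 3 × Fin (n + 1)) ⊕ (Fin k × Fin 2))))

/-- The conic-parameter part of a marked parameter point. -/
def vparts {n k : ℕ} (w : PSp n k) : Fin 3 → Vn n := fun i j => w (Sum.inl (i, j))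

/-- The vector representing the `m`-th marked point. -/
def ptVec {n k : ℕ} (w : PSp n k) (m : Fin k) : Vn n :=
  (w (Sum.inr (m, 0))) ^ 2 • vparts w 0
    + (w (Sum.inr (m, 0)) * w (Sum.inr (m, 1))) • vparts w 1
    + (w (Sum.inr (m, 1))) ^ 2 • vparts w 2

/-- Nondegeneracy of a marked parameter point. -/
def goodW {n k : ℕ} (w : PSp n k) : Prop :=
  LinearIndependent ℂ (vparts w) ∧
    ∀ m : Fin k, ¬ (w (Sum.inr (m, 0)) = 0 ∧ w (Sum.inr (m, 1)) = 0)

/-- The conic `conicOf v` belongs (as an element of the conic space) to `S`. -/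
def conicMem {n : ℕ} (S : Set (Conic n)) (v : Fin 3 → Vn n) : Prop :=
  ∃ c ∈ S, Conic.toSet c = conicOf v

/-- `x = [u]` in `ℙ^n`. -/
def repEq {n : ℕ} (x : Pr n) (u : Vn n) : Prop :=
  ∃ c : ℂ, c ≠ 0 ∧ prRep x = c • u

/-- Forget all marked points except the `m`-th one. -/
def resPt {n k : ℕ} (w : PSp n k) (m : Fin k) : PSp n 1 :=
  fun z => match z with
    | Sum.inl a => w (Sum.inl a)
    | Sum.inr (_, j) => w (Sum.inr (m, j))

/-- The condition `C ⊂ T_x X` for the conic and marked point of `w`. -/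
def tangentCond {n : ℕ} (F : MvPolynomial (Fin (n + 1)) ℂ) (w : PSp n 1) : Prop :=
  ∀ x : Pr n, repEq x (ptVec w 0) → conicOf (vparts w) ⊆ embTangent F x

/-- The parameter space of the universal family `U = {(C,x) : C ∈ R, x ∈ C}`. -/
def Uparam {n : ℕ} (R : Set (Conic n)) : Set (PSp n 1) :=
  {w | goodW w ∧ conicMem R (vparts w)}

/-- The parameter space of `{(C,x) ∈ U : C ⊂ T_x X}`. -/
def UstarAmb {n : ℕ} (F : MvPolynomial (Fin (n + 1)) ℂ) (R : Set (Conic n)) :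
    Set (PSp n 1) :=
  {w | goodW w ∧ conicMem R (vparts w) ∧ tangentCond F w}

/-- Dominance of the projection `U* → R`. -/
def domToR {n : ℕ} (R : Set (Conic n)) (Ustar : Set (PSp n 1)) : Prop :=
  R ⊆ closure {c : Conic n | ∃ w ∈ Ustar, Conic.toSet c = conicOf (vparts w)}

/-- `R*_x = π(ev⁻¹(x) ∩ U*)`: conics `C` with `x ∈ C ⊂ T_x X` coming from `U*`. -/
def Rstar {n : ℕ} (Ustar : Set (PSp n 1)) (x : Pr n) : Set (Conic n) :=
  {c | ∃ w ∈ Ustar, Conic.toSet c = conicOf (vparts w) ∧ repEq x (ptVec w 0)}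

/-- The parameter space of `U* ×_R U`. -/
def UUset {n : ℕ} (R : Set (Conic n)) (Ustar : Set (PSp n 1)) : Set (PSp n 2) :=
  {w | goodW w ∧ conicMem R (vparts w) ∧ resPt w 0 ∈ Ustar}

/-- The parameter space of `U* ×_R U ×_R U`. -/
def UUUset {n : ℕ} (R : Set (Conic n)) (Ustar : Set (PSp n 1)) : Set (PSp n 3) :=
  {w | goodW w ∧ conicMem R (vparts w) ∧ resPt w 0 ∈ Ustar}

/-- `ev(U*) ⊆ ℙ^n`. -/
def evUstar {n : ℕ} (Ustar : Set (PSp n 1)) : Set (Pr n) :=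
  {x | ∃ w ∈ Ustar, repEq x (ptVec w 0)}

/-- The image of `μ : U* ×_R U → ev(U*) × Y`. -/
def imMu {n : ℕ} (R : Set (Conic n)) (Ustar : Set (PSp n 1)) : Set (Pr n × Pr n) :=
  {q | ∃ w ∈ UUset R Ustar, repEq q.1 (ptVec w 0) ∧ repEq q.2 (ptVec w 1)}

/-- The hyperplane of `ℙ^n` with dual coordinates `ξ` (a point of `(ℙ^n)^∨ ≃ ℙ^n`). -/
def hypOf {n : ℕ} (ξ : Pr n) : Set (Pr n) :=
  {p | (∑ i, prRep ξ i * prRep p i) = 0}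

/-- The restriction of `F` to the plane spanned by `v₀, v₁, v₂`, as a ternary form. -/
def pullbackPlane {n : ℕ} (v : Fin 3 → Vn n) (F : MvPolynomial (Fin (n + 1)) ℂ) :
    MvPolynomial (Fin 3) ℂ :=
  MvPolynomial.aeval
    (fun i => MvPolynomial.C (v 0 i) * MvPolynomial.X 0
      + MvPolynomial.C (v 1 i) * MvPolynomial.X 1
      + MvPolynomial.C (v 2 i) * MvPolynomial.X 2) F

/-- The equation of the standard conic `{[s²:st:t²]}` in the plane: `x₀x₂ - x₁²`. -/
def qconic : MvPolynomial (Fin 3) ℂ :=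
  MvPolynomial.X 0 * MvPolynomial.X 2 - MvPolynomial.X 1 ^ 2

/-- The curve in the plane `⟨v₀,v₁,v₂⟩ ⊂ ℙ^n` cut out by a ternary form `h`. -/
def planeCurve {n : ℕ} (v : Fin 3 → Vn n) (h : MvPolynomial (Fin 3) ℂ) : Set (Pr n) :=
  {p | ∃ a b c : ℂ, ¬ (a = 0 ∧ b = 0 ∧ c = 0) ∧
    MvPolynomial.eval ![a, b, c] h = 0 ∧
    ∃ e : ℂ, e ≠ 0 ∧ prRep p = e • (a • v 0 + b • v 1 + c • v 2)}


section ConicTangentHelpers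

/-- Chain rule for a derivation applied to `aeval`. -/
lemma derivation_aeval {ι : Type} [Fintype ι] [DecidableEq ι]
    {A : Type} [CommRing A] [Algebra ℂ A] (D : Derivation ℂ A A)
    (σ : ι → A) (p : MvPolynomial ι ℂ) :
    D (aeval σ p) = ∑ i, aeval σ (pderiv i p) * D (σ i) := by
  induction p using MvPolynomial.induction_on with
  | C a => simp
  | add p q hp hq => simp [hp, hq, map_add, add_mul, Finset.sum_add_distrib]
  | mul_X p i hp =>
      have key : ∀ j, aeval σ (pderiv j (p * X i))
          = aeval σ (pderiv j p) * σ i + aeval σ p * (if j = i then 1 else 0) := by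
        intro j
        rw [pderiv_mul]
        by_cases h : j = i
        · subst h; simp
        · simp [pderiv_X_of_ne (Ne.symm h), h]
      rw [map_mul, aeval_X, Derivation.leibniz, hp]
      simp only [key, add_mul, Finset.sum_add_distrib, smul_eq_mul]
      rw [show ∑ j, aeval σ (pderiv j p) * σ i * D (σ j)
          = σ i * ∑ j, aeval σ (pderiv j p) * D (σ j) by
        rw [Finset.mul_sum]; exact Finset.sum_congr rfl fun j _ => by ring]
      rw [show (∑ j, aeval σ p * (if j = i then 1 else 0) * D (σ j)) = aeval σ p * D (σ i) by
        simp [ite_mul, mul_ite, Finset.sum_ite_eq', Finset.mem_univ]]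
      ring

lemma eval_smul_hom {ι : Type} {f : MvPolynomial ι ℂ} {m : ℕ}
    (hf : f.IsHomogeneous m) (c : ℂ) (x : ι → ℂ) :
    MvPolynomial.eval (c • x) f = c ^ m * MvPolynomial.eval x f := by
  rw [MvPolynomial.eval_eq, MvPolynomial.eval_eq, Finset.mul_sum]
  refine Finset.sum_congr rfl fun d hd => ?_
  have hdeg : d.degree = m := by
    by_contra h
    exact (MvPolynomial.mem_support_iff.mp hd) (hf.coeff_eq_zero h)
  have : ∏ i ∈ d.support, (c • x) i ^ d i
      = c ^ m * ∏ i ∈ d.support, x i ^ d i := by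
    simp only [Pi.smul_apply, smul_eq_mul, mul_pow]
    rw [Finset.prod_mul_distrib, Finset.prod_pow_eq_pow_sum]
    rw [show ∑ i ∈ d.support, d i = m from hdeg ▸ rfl]
  rw [this]; ring

lemma eval_aeval' {ι κ : Type} (x : κ → ℂ) (σ : ι → MvPolynomial κ ℂ) (p : MvPolynomial ι ℂ) :
    MvPolynomial.eval x (aeval σ p) = MvPolynomial.eval (fun i => MvPolynomial.eval x (σ i)) p := by
  have h := comp_aeval_apply (f := σ) (aeval (R := ℂ) x) p
  simp only [show ⇑(aeval (R := ℂ) x) = MvPolynomial.eval x from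
    congrArg DFunLike.coe (coe_aeval_eq_eval x) ▸ rfl] at h
  exact h

lemma peval_aeval {ι : Type} (s : ℂ) (τ : ι → Polynomial ℂ) (p : MvPolynomial ι ℂ) :
    Polynomial.eval s (aeval τ p) = MvPolynomial.eval (fun i => Polynomial.eval s (τ i)) p := by
  have h := comp_aeval_apply (f := τ) (Polynomial.aeval (R := ℂ) s) p
  simp only [Polynomial.coe_aeval_eq_eval] at h
  rw [h, ← coe_aeval_eq_eval]; rfl

/-- Scaling of partial derivatives of a degree-6 homogeneous polynomial. -/
lemma eval_smul_pderiv {ι : Type} [Fintype ι] [DecidableEq ι] {F : MvPolynomial ι ℂ}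
    (hhom : F.IsHomogeneous 6) {c : ℂ} (hc : c ≠ 0) (j : ι) (u : ι → ℂ) :
    MvPolynomial.eval (c • u) (pderiv j F) = c ^ 5 * MvPolynomial.eval u (pderiv j F) := by
  set ρ : ι → MvPolynomial ι ℂ := fun i => MvPolynomial.C c * X i with hρ
  have h1 : aeval ρ F = MvPolynomial.C (c ^ 6) * F := by
    apply MvPolynomial.funext
    intro x
    rw [eval_aeval']
    have : (fun i => MvPolynomial.eval x (ρ i)) = c • x := by
      funext i; simp [hρ, mul_comm]
    rw [this, eval_smul_hom hhom, MvPolynomial.eval_mul, MvPolynomial.eval_C]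
  have h2 := derivation_aeval (pderiv j) ρ F
  rw [h1] at h2
  have h3 : ∀ i, pderiv j (ρ i) = MvPolynomial.C c * (if i = j then 1 else 0) := by
    intro i
    by_cases h : i = j
    · subst h; simp [hρ]
    · simp [hρ, pderiv_X_of_ne h, h]
  simp only [h3] at h2
  rw [pderiv_C_mul, Finset.sum_congr rfl (fun i _ => by
      rw [show aeval ρ (pderiv i F) * (MvPolynomial.C c * (if i = j then 1 else 0))
        = (if i = j then aeval ρ (pderiv i F) * MvPolynomial.C c else 0) by split <;> ring])] at h2
  rw [Finset.sum_ite_eq' Finset.univ j (fun i => aeval ρ (pderiv i F) * MvPolynomial.C c)] at h2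
  simp only [Finset.mem_univ, if_true] at h2
  have h4 := congrArg (MvPolynomial.eval u) h2.symm
  rw [MvPolynomial.eval_mul, MvPolynomial.eval_mul, MvPolynomial.eval_C, MvPolynomial.eval_C,
    eval_aeval'] at h4
  have : (fun i => MvPolynomial.eval u (ρ i)) = c • u := by funext i; simp [hρ, mul_comm]
  rw [this] at h4
  have h5 : MvPolynomial.eval (c • u) (pderiv j F) * c
      = c ^ 5 * MvPolynomial.eval u (pderiv j F) * c := by
    rw [h4]; ring
  exact mul_right_cancel₀ hc h5

/-- The Veronese parametrization vector. -/
def phiV {n : ℕ} (v : Fin 3 → Vn n) (s t : ℂ) : Vn n :=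
  s ^ 2 • v 0 + (s * t) • v 1 + t ^ 2 • v 2

/-- The substitution implementing `phiV` at the polynomial level. -/
def sigmaSub {n : ℕ} (v : Fin 3 → Vn n) : Fin (n + 1) → MvPolynomial (Fin 2) ℂ :=
  fun i => MvPolynomial.C (v 0 i) * X 0 ^ 2 + MvPolynomial.C (v 1 i) * (X 0 * X 1)
    + MvPolynomial.C (v 2 i) * X 1 ^ 2

/-- The three coefficient functions of the restricted differential. -/
def Abar {n : ℕ} (v : Fin 3 → Vn n) (F : MvPolynomial (Fin (n + 1)) ℂ)
    (k : Fin 3) (s t : ℂ) : ℂ :=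
  ∑ i, v k i * MvPolynomial.eval (phiV v s t) (pderiv i F)

/-- The polynomial coefficients of the restricted differential. -/
def AkD {n : ℕ} (v : Fin 3 → Vn n) (F : MvPolynomial (Fin (n + 1)) ℂ)
    (k : Fin 3) : MvPolynomial (Fin 2) ℂ :=
  ∑ i, MvPolynomial.C (v k i) * aeval (sigmaSub v) (pderiv i F)

lemma sigma_eval {n : ℕ} (v : Fin 3 → Vn n) (x : Fin 2 → ℂ) :
    (fun i => MvPolynomial.eval x (sigmaSub v i)) = phiV v (x 0) (x 1) := by
  funext j
  simp only [sigmaSub, phiV, map_add, MvPolynomial.eval_mul, MvPolynomial.eval_C,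
    MvPolynomial.eval_pow, MvPolynomial.eval_X, Pi.add_apply, Pi.smul_apply, smul_eq_mul]
  ring

lemma evalAk {n : ℕ} (v : Fin 3 → Vn n) (F : MvPolynomial (Fin (n + 1)) ℂ)
    (k : Fin 3) (x : Fin 2 → ℂ) :
    MvPolynomial.eval x (AkD v F k) = Abar v F k (x 0) (x 1) := by
  unfold AkD Abar
  rw [map_sum]
  refine Finset.sum_congr rfl fun i _ => ?_
  rw [MvPolynomial.eval_mul, MvPolynomial.eval_C, eval_aeval', sigma_eval]

lemma phiV_ne_zero {n : ℕ} {v : Fin 3 → Vn n} (hv : LinearIndependent ℂ v)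
    {s t : ℂ} (h : ¬(s = 0 ∧ t = 0)) : phiV v s t ≠ 0 := by
  intro h0
  have hz := Fintype.linearIndependent_iff.mp hv ![s ^ 2, s * t, t ^ 2] (by
    rw [Fin.sum_univ_three]
    simpa [phiV] using h0)
  have hs : s = 0 := by have := hz 0; simpa [pow_eq_zero_iff] using this
  have ht : t = 0 := by have := hz 2; simpa [pow_eq_zero_iff] using this
  exact h ⟨hs, ht⟩

lemma phiV_smul {n : ℕ} (v : Fin 3 → Vn n) (lam s t : ℂ) :
    phiV v (lam * s) (lam * t) = lam ^ 2 • phiV v s t := by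
  funext j
  simp only [phiV, Pi.add_apply, Pi.smul_apply, smul_eq_mul]
  ring

/-- The key algebraic lemma: existence of a common zero of the three coefficients. -/
lemma exists_common_zero {n : ℕ} (F : MvPolynomial (Fin (n + 1)) ℂ)
    (hhom : F.IsHomogeneous 6) (v : Fin 3 → Vn n)
    (hvan : ∀ s t : ℂ, MvPolynomial.eval (phiV v s t) F = 0) :
    ∃ s₀ t₀ : ℂ, ¬(s₀ = 0 ∧ t₀ = 0) ∧ ∀ k, Abar v F k s₀ t₀ = 0 := by
  classical
  have hG : aeval (sigmaSub v) F = 0 := by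
    apply MvPolynomial.funext
    intro x
    rw [eval_aeval', sigma_eval, hvan]
    simp
  have hrel : ∀ jj : Fin 2, (0 : MvPolynomial (Fin 2) ℂ)
      = ∑ i, aeval (sigmaSub v) (pderiv i F) * pderiv jj (sigmaSub v i) := by
    intro jj
    have h := derivation_aeval (pderiv jj) (sigmaSub v) F
    rw [hG, map_zero] at h
    exact h
  have hpd0 : ∀ i, pderiv (0 : Fin 2) (sigmaSub v i)
      = MvPolynomial.C (v 0 i) * (2 * X 0) + MvPolynomial.C (v 1 i) * X 1 := by
    intro i
    simp only [sigmaSub, map_add, pderiv_C_mul, pderiv_pow, pderiv_mul, pderiv_X_self, pderiv_C,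
      pderiv_X_of_ne (show (1 : Fin 2) ≠ 0 by decide)]
    ring
  have hpd1 : ∀ i, pderiv (1 : Fin 2) (sigmaSub v i)
      = MvPolynomial.C (v 1 i) * X 0 + MvPolynomial.C (v 2 i) * (2 * X 1) := by
    intro i
    simp only [sigmaSub, map_add, pderiv_C_mul, pderiv_pow, pderiv_mul, pderiv_X_self, pderiv_C,
      pderiv_X_of_ne (show (0 : Fin 2) ≠ 1 by decide)]
    ring
  have hrel0 : 2 * X 0 * AkD v F 0 + X 1 * AkD v F 1 = 0 := by
    have h := hrel 0
    simp only [hpd0] at h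
    unfold AkD
    rw [Finset.mul_sum, Finset.mul_sum, ← Finset.sum_add_distrib]
    rw [show (0 : MvPolynomial (Fin 2) ℂ)
        = ∑ i, aeval (sigmaSub v) (pderiv i F)
          * (MvPolynomial.C (v 0 i) * (2 * X 0) + MvPolynomial.C (v 1 i) * X 1) from h]
    exact Finset.sum_congr rfl fun i _ => by ring
  have hrel1 : X 0 * AkD v F 1 + 2 * X 1 * AkD v F 2 = 0 := by
    have h := hrel 1
    simp only [hpd1] at h
    unfold AkD
    rw [Finset.mul_sum, Finset.mul_sum, ← Finset.sum_add_distrib]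
    rw [show (0 : MvPolynomial (Fin 2) ℂ)
        = ∑ i, aeval (sigmaSub v) (pderiv i F)
          * (MvPolynomial.C (v 1 i) * X 0 + MvPolynomial.C (v 2 i) * (2 * X 1)) from h]
    exact Finset.sum_congr rfl fun i _ => by ring
  -- scalar relations
  have scalar0 : ∀ s t : ℂ, 2 * s * Abar v F 0 s t + t * Abar v F 1 s t = 0 := by
    intro s t
    have h := congrArg (MvPolynomial.eval ![s, t]) hrel0
    simpa [evalAk] using h
  have scalar1 : ∀ s t : ℂ, s * Abar v F 1 s t + 2 * t * Abar v F 2 s t = 0 := by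
    intro s t
    have h := congrArg (MvPolynomial.eval ![s, t]) hrel1
    simpa [evalAk] using h
  -- chart polynomials
  set e1 : MvPolynomial (Fin 2) ℂ →ₐ[ℂ] Polynomial ℂ := aeval ![Polynomial.X, 1] with he1
  set e2 : MvPolynomial (Fin 2) ℂ →ₐ[ℂ] Polynomial ℂ := aeval ![1, Polynomial.X] with he2
  have e1_eval : ∀ (A : MvPolynomial (Fin 2) ℂ) (s : ℂ),
      Polynomial.eval s (e1 A) = MvPolynomial.eval ![s, 1] A := by
    intro A s
    rw [he1, peval_aeval]
    rw [show (fun i => Polynomial.eval s (![Polynomial.X, 1] i)) = ![s, (1 : ℂ)] by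
      funext i; fin_cases i <;> simp]
  have e2_eval : ∀ (A : MvPolynomial (Fin 2) ℂ) (t : ℂ),
      Polynomial.eval t (e2 A) = MvPolynomial.eval ![1, t] A := by
    intro A t
    rw [he2, peval_aeval]
    rw [show (fun i => Polynomial.eval t (![1, Polynomial.X] i)) = ![(1 : ℂ), t] by
      funext i; fin_cases i <;> simp]
  have hae : ∀ (k : Fin 3) (s : ℂ), Polynomial.eval s (e1 (AkD v F k)) = Abar v F k s 1 := by
    intro k s
    rw [e1_eval, evalAk]
    simp
  have hbe : ∀ (k : Fin 3) (t : ℂ), Polynomial.eval t (e2 (AkD v F k)) = Abar v F k 1 t := by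
    intro k t
    rw [e2_eval, evalAk]
    simp
  by_cases hroot : ∃ s₀ : ℂ, Polynomial.eval s₀ (e1 (AkD v F 0)) = 0
  · obtain ⟨s₀, hs₀⟩ := hroot
    refine ⟨s₀, 1, by simp, ?_⟩
    have hA0 : Abar v F 0 s₀ 1 = 0 := by rw [← hae]; exact hs₀
    have hA1 : Abar v F 1 s₀ 1 = 0 := by
      have h := scalar0 s₀ 1
      rw [hA0] at h
      have h2 : (1 : ℂ) * Abar v F 1 s₀ 1 = 0 := by linear_combination h
      simpa using h2
    have hA2 : Abar v F 2 s₀ 1 = 0 := by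
      have h := scalar1 s₀ 1
      rw [hA1] at h
      have h2 : (2 : ℂ) * Abar v F 2 s₀ 1 = 0 := by linear_combination h
      exact (mul_eq_zero.mp h2).resolve_left two_ne_zero
    intro k
    fin_cases k
    · exact hA0
    · exact hA1
    · exact hA2
  · -- the polynomial `a 0` has no root, hence it is a nonzero constant
    push_neg at hroot
    have hdeg : (e1 (AkD v F 0)).degree = 0 := by
      by_contra hd
      obtain ⟨z, hz⟩ := IsAlgClosed.exists_root (e1 (AkD v F 0)) hd
      exact hroot z hz
    have hcconst : e1 (AkD v F 0) = Polynomial.C ((e1 (AkD v F 0)).coeff 0) :=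
      Polynomial.eq_C_of_degree_le_zero (le_of_eq hdeg)
    set c : ℂ := (e1 (AkD v F 0)).coeff 0 with hcdef
    -- scaling of `Abar 0`
    have hscaleA : ∀ t : ℂ, t ≠ 0 → Abar v F 0 1 t = (t ^ 2) ^ 5 * Abar v F 0 (1 / t) 1 := by
      intro t ht
      have hphi : phiV v 1 t = (t ^ 2) • phiV v (1 / t) 1 := by
        rw [← phiV_smul v t (1 / t) 1, mul_one_div_cancel ht, mul_one]
      unfold Abar
      rw [Finset.mul_sum]
      refine Finset.sum_congr rfl fun i _ => ?_
      rw [hphi, eval_smul_pderiv hhom (pow_ne_zero 2 ht)]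
      ring
    -- unfolding relations in the second chart
    have e2X0 : e2 (X 0) = 1 := by rw [he2]; simp
    have e2X1 : e2 (X 1) = Polynomial.X := by rw [he2]; simp
    have hb1rel : 2 * e2 (AkD v F 0) + Polynomial.X * e2 (AkD v F 1) = 0 := by
      have h := congrArg e2 hrel0
      simpa only [map_add, map_mul, map_ofNat, map_zero, e2X0, e2X1, mul_one, one_mul] using h
    have hb2rel : e2 (AkD v F 1) + 2 * Polynomial.X * e2 (AkD v F 2) = 0 := by
      have h := congrArg e2 hrel1
      simpa only [map_add, map_mul, map_ofNat, map_zero, e2X0, e2X1, mul_one, one_mul] using h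
    -- identify `b 0`
    have hb0 : e2 (AkD v F 0) = Polynomial.C c * Polynomial.X ^ 10 := by
      apply Polynomial.eq_of_infinite_eval_eq
      apply Set.Infinite.mono (s := {t : ℂ | t ≠ 0})
      · intro t ht
        show Polynomial.eval t (e2 (AkD v F 0))
            = Polynomial.eval t (Polynomial.C c * Polynomial.X ^ 10)
        rw [hbe 0 t, hscaleA t ht]
        rw [show Abar v F 0 (1 / t) 1 = c by
          rw [← hae 0 (1 / t), hcconst]; simp]
        simp only [Polynomial.eval_mul, Polynomial.eval_pow, Polynomial.eval_C,
          Polynomial.eval_X]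
        ring
      · exact Set.Finite.infinite_compl (Set.finite_singleton 0)
    have hXb1 : Polynomial.X * e2 (AkD v F 1)
        = Polynomial.X * (-(2 * Polynomial.C c * Polynomial.X ^ 9)) := by
      linear_combination hb1rel - 2 * hb0
    have hb1 : e2 (AkD v F 1) = -(2 * Polynomial.C c * Polynomial.X ^ 9) :=
      mul_left_cancel₀ Polynomial.X_ne_zero hXb1
    have hXb2 : (2 * Polynomial.X) * e2 (AkD v F 2)
        = (2 * Polynomial.X) * (Polynomial.C c * Polynomial.X ^ 8) := by
      linear_combination hb2rel - hb1
    have hb2 : e2 (AkD v F 2) = Polynomial.C c * Polynomial.X ^ 8 :=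
      mul_left_cancel₀ (mul_ne_zero two_ne_zero Polynomial.X_ne_zero) hXb2
    refine ⟨1, 0, by simp, ?_⟩
    intro k
    fin_cases k
    · show Abar v F 0 1 0 = 0
      rw [show Abar v F 0 1 0 = Polynomial.eval 0 (e2 (AkD v F 0)) from (hbe 0 0).symm, hb0]
      simp
    · show Abar v F 1 1 0 = 0
      rw [show Abar v F 1 1 0 = Polynomial.eval 0 (e2 (AkD v F 1)) from (hbe 1 0).symm, hb1]
      simp
    · show Abar v F 2 1 0 = 0
      rw [show Abar v F 2 1 0 = Polynomial.eval 0 (e2 (AkD v F 2)) from (hbe 2 0).symm, hb2]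
      simp

end ConicTangentHelpers

/-- For a hypersurface `X ⊂ ℙ^n` of degree `6` and a smooth conic `C ⊆ X`,
there is always a point `x ∈ C` with `C ⊆ T_x X`. -/
theorem exists_point_conic_in_tangent (n : ℕ) (F : MvPolynomial (Fin (n + 1)) ℂ)
    (hF0 : F ≠ 0) (hhom : F.IsHomogeneous 6)
    (C : Set (Pr n)) (hC : IsSmoothConic C) (hCX : C ⊆ projZeros F) :
    ∃ x ∈ C, C ⊆ embTangent F x := by
  obtain ⟨v, hv, rfl⟩ := hC
  have hvan : ∀ s t : ℂ, MvPolynomial.eval (phiV v s t) F = 0 := by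
    intro s t
    by_cases h : s = 0 ∧ t = 0
    · obtain ⟨rfl, rfl⟩ := h
      have h0 : phiV v 0 0 = 0 := by funext j; simp [phiV]
      have h1 := eval_smul_hom hhom 0 (0 : Vn n)
      rw [h0]
      simpa using h1
    · have hu : phiV v s t ≠ 0 := phiV_ne_zero hv h
      obtain ⟨a, ha⟩ := Projectivization.exists_smul_eq_mk_rep ℂ (phiV v s t) hu
      have hrep : prRep (Projectivization.mk ℂ (phiV v s t) hu : Pr n)
          = (a : ℂ) • phiV v s t := by
        show Projectivization.rep (Projectivization.mk ℂ (phiV v s t) hu) = (a : ℂ) • phiV v s t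
        rw [← ha, Units.smul_def]
      have hmem : (Projectivization.mk ℂ (phiV v s t) hu : Pr n) ∈ conicOf v :=
        ⟨s, t, h, (a : ℂ), Units.ne_zero a, hrep⟩
      have hz : MvPolynomial.eval
          (prRep (Projectivization.mk ℂ (phiV v s t) hu : Pr n)) F = 0 := hCX hmem
      rw [hrep, eval_smul_hom hhom] at hz
      exact (mul_eq_zero.mp hz).resolve_left (pow_ne_zero 6 (Units.ne_zero a))
  obtain ⟨s₀, t₀, hst, hA⟩ := exists_common_zero F hhom v hvan
  have hu : phiV v s₀ t₀ ≠ 0 := phiV_ne_zero hv hst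
  obtain ⟨a, ha⟩ := Projectivization.exists_smul_eq_mk_rep ℂ (phiV v s₀ t₀) hu
  have hrep : prRep (Projectivization.mk ℂ (phiV v s₀ t₀) hu : Pr n)
      = (a : ℂ) • phiV v s₀ t₀ := by
    show Projectivization.rep (Projectivization.mk ℂ (phiV v s₀ t₀) hu) = (a : ℂ) • phiV v s₀ t₀
    rw [← ha, Units.smul_def]
  refine ⟨(Projectivization.mk ℂ (phiV v s₀ t₀) hu : Pr n),
    ⟨s₀, t₀, hst, (a : ℂ), Units.ne_zero a, hrep⟩, ?_⟩
  intro p hp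
  obtain ⟨s, t, hst', c, hc, hprep⟩ := hp
  have hsum : (∑ i, MvPolynomial.eval (prRep (Projectivization.mk ℂ (phiV v s₀ t₀) hu : Pr n)) (pderiv i F) * prRep p i) = 0 := by
    have step : ∀ i : Fin (n + 1), MvPolynomial.eval (prRep (Projectivization.mk ℂ (phiV v s₀ t₀) hu : Pr n)) (pderiv i F) * prRep p i = ((a : ℂ) ^ 5 * c * s ^ 2) * (v 0 i * MvPolynomial.eval (phiV v s₀ t₀) (pderiv i F)) + (((a : ℂ) ^ 5 * c * (s * t)) * (v 1 i * MvPolynomial.eval (phiV v s₀ t₀) (pderiv i F)) + ((a : ℂ) ^ 5 * c * t ^ 2) * (v 2 i * MvPolynomial.eval (phiV v s₀ t₀) (pderiv i F))) := by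
      intro i
      rw [hrep, eval_smul_pderiv hhom (Units.ne_zero a), hprep]
      simp only [Pi.smul_apply, Pi.add_apply, smul_eq_mul]
      ring
    rw [Finset.sum_congr rfl fun i _ => step i, Finset.sum_add_distrib, Finset.sum_add_distrib,
      ← Finset.mul_sum, ← Finset.mul_sum, ← Finset.mul_sum]
    have h0 := hA 0
    have h1 := hA 1
    have h2 := hA 2
    unfold Abar at h0 h1 h2
    rw [h0, h1, h2]
    ring
  have hker : (∑ i, MvPolynomial.eval
      (prRep (Projectivization.mk ℂ (phiV v s₀ t₀) hu : Pr n)) (pderiv i F)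
        • (LinearMap.proj i : Vn n →ₗ[ℂ] ℂ)) (prRep p) = 0 := by
    rw [LinearMap.sum_apply]
    simpa only [LinearMap.smul_apply, LinearMap.proj_apply, smul_eq_mul] using hsum
  exact LinearMap.mem_ker.mpr hker

end
end

section
/- Let X ⊂ P^n be a hypersurface and let x ≠ y be points of X with y ∈ T_xX. Then every smooth conic C ⊂ X passing through both x and y satisfies C ⊂ T_xX. -/
open MvPolynomial Module

noncomputable section

-- ===== aux lemmas =====

lemma evalPolyAeval {N : ℕ} (g : Fin N → Polynomial ℂ) (F : MvPolynomial (Fin N) ℂ) (ε : ℂ) :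
    (MvPolynomial.aeval g F).eval ε = MvPolynomial.eval (fun i => (g i).eval ε) F := by
  rw [MvPolynomial.aeval_def]
  have := MvPolynomial.eval₂_comp_left (Polynomial.evalRingHom ε)
    (algebraMap ℂ (Polynomial ℂ)) g F
  simp only [Polynomial.coe_evalRingHom] at this
  rw [this, MvPolynomial.eval]
  congr 1
  · ext a; simp

lemma degree_sum_of_mem_support {N d : ℕ} {F : MvPolynomial (Fin N) ℂ}
    (hF : F.IsHomogeneous d) {m : Fin N →₀ ℕ} (hm : m ∈ F.support) :
    ∑ i, m i = d := by
  have h1 : m.degree = d := by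
    have := hF (MvPolynomial.mem_support_iff.mp hm)
    rw [Finsupp.degree_eq_weight_one]
    exact this
  rw [← h1, Finsupp.degree]
  exact (Finset.sum_subset (Finset.subset_univ _)
    (fun i _ hi => Finsupp.notMem_support_iff.mp hi)).symm

lemma aeval_linear_subst {N d : ℕ} {F : MvPolynomial (Fin N) ℂ}
    (hF : F.IsHomogeneous d) (y : Fin N → ℂ) (p : Polynomial ℂ) :
    MvPolynomial.aeval (fun i => Polynomial.C (y i) * p) F
      = Polynomial.C (MvPolynomial.eval y F) * p ^ d := by
  conv_lhs => rw [F.as_sum]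
  rw [map_sum, MvPolynomial.eval_eq', map_sum, Finset.sum_mul]
  refine Finset.sum_congr rfl fun m hm => ?_
  rw [MvPolynomial.aeval_monomial]
  rw [Finsupp.prod_fintype _ _ (fun i => pow_zero _)]
  have : ∀ i, (Polynomial.C (y i) * p) ^ m i = Polynomial.C (y i ^ m i) * p ^ m i := by
    intro i; rw [mul_pow, map_pow]
  simp only [this]
  rw [Finset.prod_mul_distrib, Finset.prod_pow_eq_pow_sum, degree_sum_of_mem_support hF hm,
    ← map_prod, ← mul_assoc]
  rw [show (algebraMap ℂ (Polynomial ℂ)) (MvPolynomial.coeff m F)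
      = Polynomial.C (MvPolynomial.coeff m F) from rfl, ← map_mul]

lemma eval_smul_homog {N d : ℕ} {F : MvPolynomial (Fin N) ℂ}
    (hF : F.IsHomogeneous d) (c : ℂ) (y : Fin N → ℂ) :
    MvPolynomial.eval (c • y) F = c ^ d * MvPolynomial.eval y F := by
  have h := congrArg (Polynomial.eval (0 : ℂ))
    (aeval_linear_subst hF y (Polynomial.C c))
  rw [evalPolyAeval] at h
  simp only [Polynomial.eval_mul, Polynomial.eval_pow, Polynomial.eval_C] at h
  have h2 : c • y = (fun i => y i * c) := by
    funext i; simp [mul_comm]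
  rw [h2, h, mul_comm]

lemma coeff01_aeval {N : ℕ} (g : Fin N → Polynomial ℂ) (F : MvPolynomial (Fin N) ℂ) :
    (MvPolynomial.aeval g F).coeff 0 = MvPolynomial.eval (fun i => (g i).coeff 0) F ∧
    (MvPolynomial.aeval g F).coeff 1
      = ∑ i, MvPolynomial.eval (fun i => (g i).coeff 0) (MvPolynomial.pderiv i F)
          * (g i).coeff 1 := by
  induction F using MvPolynomial.induction_on with
  | C a =>
      constructor
      · simp [MvPolynomial.aeval_C, Algebra.algebraMap_self_apply]
      · simp [MvPolynomial.aeval_C, MvPolynomial.pderiv_C]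
  | add p q hp hq =>
      constructor
      · simp [map_add, Polynomial.coeff_add, hp.1, hq.1]
      · simp only [map_add, Polynomial.coeff_add, hp.2, hq.2, MvPolynomial.eval_add]
        rw [← Finset.sum_add_distrib]
        exact Finset.sum_congr rfl fun i _ => by ring
  | mul_X p j hp =>
      have hmul : (MvPolynomial.aeval g) (p * MvPolynomial.X j)
          = (MvPolynomial.aeval g) p * g j := by simp
      constructor
      · rw [hmul, Polynomial.mul_coeff_zero, hp.1]
        simp
      · rw [hmul]
        have hc1 : ((MvPolynomial.aeval g) p * g j).coeff 1
            = ((MvPolynomial.aeval g) p).coeff 0 * (g j).coeff 1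
              + ((MvPolynomial.aeval g) p).coeff 1 * (g j).coeff 0 := by
          rw [Polynomial.coeff_mul]
          rw [Finset.Nat.antidiagonal_succ]
          simp [Finset.Nat.antidiagonal_zero, Prod.map]
        rw [hc1, hp.1, hp.2]
        have : ∀ i : Fin (N),
            MvPolynomial.eval (fun i => (g i).coeff 0)
              (MvPolynomial.pderiv i (p * MvPolynomial.X j)) * (g i).coeff 1
            = (MvPolynomial.eval (fun i => (g i).coeff 0) (MvPolynomial.pderiv i p)
                * (g j).coeff 0) * (g i).coeff 1
              + (if j = i then MvPolynomial.eval (fun i => (g i).coeff 0) p * (g i).coeff 1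
                  else 0) := by
          intro i
          rw [MvPolynomial.pderiv_mul]
          simp only [MvPolynomial.pderiv_X, map_add, map_mul, MvPolynomial.eval_X]
          by_cases h : j = i
          · subst h
            simp only [Pi.single_eq_same, map_one, if_pos rfl, if_true]
            ring
          · rw [Pi.single_eq_of_ne h, if_neg h, map_zero]
            ring
        rw [Finset.sum_congr rfl fun i _ => this i, Finset.sum_add_distrib,
          Finset.sum_ite_eq Finset.univ j
            (fun i => MvPolynomial.eval (fun i => (g i).coeff 0) p * (g i).coeff 1)]
        simp only [Finset.mem_univ, if_true]
        rw [Finset.sum_mul]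
        rw [Finset.sum_congr rfl (fun i _ => by ring :
          ∀ i ∈ Finset.univ, (MvPolynomial.eval (fun i => (g i).coeff 0)
            ((MvPolynomial.pderiv i) p) * (g j).coeff 0) * (g i).coeff 1
          = MvPolynomial.eval (fun i => (g i).coeff 0) ((MvPolynomial.pderiv i) p)
            * (g i).coeff 1 * (g j).coeff 0)]
        ring

lemma mem_embTangent_iff {n : ℕ} (F : MvPolynomial (Fin (n + 1)) ℂ) (x p : Pr n) :
    p ∈ embTangent F x ↔
      (∑ i, MvPolynomial.eval (prRep x) (MvPolynomial.pderiv i F) * prRep p i) = 0 := by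
  show prRep p ∈ LinearMap.ker _ ↔ _
  rw [LinearMap.mem_ker]
  simp [LinearMap.sum_apply, LinearMap.smul_apply, LinearMap.proj_apply, smul_eq_mul]

lemma pr_eq_of_rep_smul {n : ℕ} (x y : Pr n) (μ : ℂ) (hμ : μ ≠ 0)
    (h : prRep y = μ • prRep x) : x = y := by
  have hx : Projectivization.mk ℂ (prRep x) (Projectivization.rep_nonzero _) = x :=
    Projectivization.mk_rep _
  have hy : Projectivization.mk ℂ (prRep y) (Projectivization.rep_nonzero _) = y :=
    Projectivization.mk_rep _
  rw [← hx, ← hy]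
  exact (Projectivization.mk_eq_mk_iff' ℂ (prRep x) (prRep y) _ _).mpr
    ⟨μ⁻¹, by rw [h, smul_smul, inv_mul_cancel₀ hμ, one_smul]⟩


/-- Lemma 3.4: if `x ≠ y` are points of a hypersurface `X = V(F)` with
`y ∈ T_x X`, then every smooth conic `C ⊆ X` through `x` and `y` satisfies
`C ⊆ T_x X`. -/
theorem lemma_Rxy_in_tangent (n d : ℕ) (F : MvPolynomial (Fin (n + 1)) ℂ)
    (hF0 : F ≠ 0) (hhom : F.IsHomogeneous d)
    (x y : Pr n) (hx : x ∈ projZeros F) (hy : y ∈ projZeros F)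
    (hxy : x ≠ y) (hyT : y ∈ embTangent F x)
    (C : Set (Pr n)) (hC : IsSmoothConic C) (hCX : C ⊆ projZeros F)
    (hxC : x ∈ C) (hyC : y ∈ C) :
    C ⊆ embTangent F x := by
  obtain ⟨v, hli, rfl⟩ := hC
  have hx' : MvPolynomial.eval (prRep x) F = 0 := hx
  have hd0 : d ≠ 0 := by
    intro hd; subst hd
    apply hF0
    apply MvPolynomial.funext (q := 0)
    intro z
    have h1 := eval_smul_homog hhom 0 z
    have h2 := eval_smul_homog hhom 0 (prRep x)
    rw [zero_smul, pow_zero, one_mul] at h1 h2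
    rw [map_zero, ← h1, h2, hx']
  have hF00 : MvPolynomial.eval (0 : Vn n) F = 0 := by
    have := eval_smul_homog hhom 0 (0 : Vn n)
    rw [smul_zero] at this
    rw [this, zero_pow hd0, zero_mul]
  obtain ⟨A, hA⟩ : ∃ A : ℂ,
      A = ∑ i, MvPolynomial.eval (prRep x) (MvPolynomial.pderiv i F) * v 0 i := ⟨_, rfl⟩
  obtain ⟨B, hB⟩ : ∃ B : ℂ,
      B = ∑ i, MvPolynomial.eval (prRep x) (MvPolynomial.pderiv i F) * v 1 i := ⟨_, rfl⟩
  obtain ⟨D, hD⟩ : ∃ D : ℂ,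
      D = ∑ i, MvPolynomial.eval (prRep x) (MvPolynomial.pderiv i F) * v 2 i := ⟨_, rfl⟩
  have expandg : ∀ α β γ : ℂ,
      (∑ i, MvPolynomial.eval (prRep x) (MvPolynomial.pderiv i F)
          * ((α • v 0 + β • v 1 + γ • v 2 : Vn n)) i)
        = α * A + β * B + γ * D := by
    intro α β γ
    rw [hA, hB, hD, Finset.mul_sum, Finset.mul_sum, Finset.mul_sum,
      ← Finset.sum_add_distrib, ← Finset.sum_add_distrib]
    refine Finset.sum_congr rfl fun i _ => ?_
    simp only [Pi.add_apply, Pi.smul_apply, smul_eq_mul]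
    ring
  have hsm : ∀ c α β γ : ℂ, c • ((α • v 0 + β • v 1 + γ • v 2 : Vn n))
      = ((c * α) • v 0 + (c * β) • v 1 + (c * γ) • v 2 : Vn n) := by
    intro c α β γ; funext i
    simp only [Pi.add_apply, Pi.smul_apply, smul_eq_mul]
    ring
  have hφ0 : ∀ s t : ℂ, ¬(s = 0 ∧ t = 0) →
      (s ^ 2 • v 0 + (s * t) • v 1 + t ^ 2 • v 2 : Vn n) ≠ 0 := by
    intro s t hst h0
    have hli' := Fintype.linearIndependent_iff.mp hli ![s ^ 2, s * t, t ^ 2]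
    have hsum : ∑ i, (![s ^ 2, s * t, t ^ 2]) i • v i = 0 := by
      rw [Fin.sum_univ_three]
      simpa using h0
    have h00 := hli' hsum 0
    have h22 := hli' hsum 2
    simp at h00 h22
    exact hst ⟨h00, h22⟩
  have hvanish : ∀ s t : ℂ,
      MvPolynomial.eval ((s ^ 2 • v 0 + (s * t) • v 1 + t ^ 2 • v 2 : Vn n)) F = 0 := by
    intro s t
    by_cases hst : s = 0 ∧ t = 0
    · obtain ⟨rfl, rfl⟩ := hst
      simpa using hF00
    · have h0 := hφ0 s t hst
      obtain ⟨a, ha⟩ := Projectivization.exists_smul_eq_mk_rep ℂ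
        ((s ^ 2 • v 0 + (s * t) • v 1 + t ^ 2 • v 2 : Vn n)) h0
      have hrep : prRep (Projectivization.mk ℂ
            ((s ^ 2 • v 0 + (s * t) • v 1 + t ^ 2 • v 2 : Vn n)) h0 : Pr n)
          = (a : ℂ) • (s ^ 2 • v 0 + (s * t) • v 1 + t ^ 2 • v 2 : Vn n) := by
        have : (Projectivization.mk ℂ
            ((s ^ 2 • v 0 + (s * t) • v 1 + t ^ 2 • v 2 : Vn n)) h0).rep
            = (a : ℂ) • (s ^ 2 • v 0 + (s * t) • v 1 + t ^ 2 • v 2 : Vn n) := by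
          rw [← ha, Units.smul_def]
        exact this
      have hmem : (Projectivization.mk ℂ
            ((s ^ 2 • v 0 + (s * t) • v 1 + t ^ 2 • v 2 : Vn n)) h0 : Pr n) ∈ conicOf v :=
        ⟨s, t, hst, (a : ℂ), Units.ne_zero a, hrep⟩
      have hz : MvPolynomial.eval (prRep (Projectivization.mk ℂ
            ((s ^ 2 • v 0 + (s * t) • v 1 + t ^ 2 • v 2 : Vn n)) h0 : Pr n)) F = 0 :=
        hCX hmem
      rw [hrep, eval_smul_homog hhom] at hz
      exact (mul_eq_zero.mp hz).resolve_left (pow_ne_zero d (Units.ne_zero a))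
  obtain ⟨s₀, t₀, hst₀, c₀, hc₀, hrx⟩ := hxC
  obtain ⟨s₁, t₁, hst₁, c₁, hc₁, hry⟩ := hyC
  have chain : ∀ w z : Vn n,
      (∀ ε : ℂ, MvPolynomial.eval (prRep x + ε • w + ε ^ 2 • z) F = 0) →
      (∑ i, MvPolynomial.eval (prRep x) (MvPolynomial.pderiv i F) * w i) = 0 := by
    intro w z hvan
    have hg0 : (fun i => ((Polynomial.C (prRep x i) + Polynomial.C (w i) * Polynomial.X
        + Polynomial.C (z i) * Polynomial.X ^ 2 : Polynomial ℂ)).coeff 0) = prRep x := by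
      funext i
      simp
    have hg1 : ∀ i, ((Polynomial.C (prRep x i) + Polynomial.C (w i) * Polynomial.X
        + Polynomial.C (z i) * Polynomial.X ^ 2 : Polynomial ℂ)).coeff 1 = w i := by
      intro i
      simp [Polynomial.coeff_add, Polynomial.coeff_C, Polynomial.coeff_C_mul,
        Polynomial.coeff_X_one, Polynomial.coeff_X_pow]
    have haev : MvPolynomial.aeval (fun i => (Polynomial.C (prRep x i)
        + Polynomial.C (w i) * Polynomial.X
        + Polynomial.C (z i) * Polynomial.X ^ 2 : Polynomial ℂ)) F = 0 := by
      apply Polynomial.funext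
      intro ε
      rw [evalPolyAeval, Polynomial.eval_zero]
      have heq : (fun i => ((Polynomial.C (prRep x i) + Polynomial.C (w i) * Polynomial.X
          + Polynomial.C (z i) * Polynomial.X ^ 2 : Polynomial ℂ)).eval ε)
          = prRep x + ε • w + ε ^ 2 • z := by
        funext i
        simp only [Polynomial.eval_add, Polynomial.eval_mul, Polynomial.eval_C,
          Polynomial.eval_X, Polynomial.eval_pow, Pi.add_apply, Pi.smul_apply, smul_eq_mul]
        ring
      rw [heq]
      exact hvan ε
    have h2 := (coeff01_aeval (fun i => (Polynomial.C (prRep x i)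
        + Polynomial.C (w i) * Polynomial.X
        + Polynomial.C (z i) * Polynomial.X ^ 2 : Polynomial ℂ)) F).2
    rw [haev, hg0] at h2
    simp only [Polynomial.coeff_zero] at h2
    have h3 : (∑ i, MvPolynomial.eval (prRep x) (MvPolynomial.pderiv i F) * w i)
        = ∑ i, MvPolynomial.eval (prRep x) (MvPolynomial.pderiv i F)
            * ((Polynomial.C (prRep x i) + Polynomial.C (w i) * Polynomial.X
              + Polynomial.C (z i) * Polynomial.X ^ 2 : Polynomial ℂ)).coeff 1 := by
      refine Finset.sum_congr rfl fun i _ => ?_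
      rw [hg1 i]
    rw [h3, ← h2]
  have keyab : ∀ a b : ℂ,
      (c₀ * (2 * s₀ * a)) * A + (c₀ * (s₀ * b + t₀ * a)) * B + (c₀ * (2 * t₀ * b)) * D = 0 := by
    intro a b
    have hvan : ∀ ε : ℂ, MvPolynomial.eval (prRep x
        + ε • ((c₀ * (2 * s₀ * a)) • v 0 + (c₀ * (s₀ * b + t₀ * a)) • v 1
            + (c₀ * (2 * t₀ * b)) • v 2 : Vn n)
        + ε ^ 2 • ((c₀ * a ^ 2) • v 0 + (c₀ * (a * b)) • v 1 + (c₀ * b ^ 2) • v 2 : Vn n))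
        F = 0 := by
      intro ε
      have hcurve : prRep x
          + ε • ((c₀ * (2 * s₀ * a)) • v 0 + (c₀ * (s₀ * b + t₀ * a)) • v 1
              + (c₀ * (2 * t₀ * b)) • v 2 : Vn n)
          + ε ^ 2 • ((c₀ * a ^ 2) • v 0 + (c₀ * (a * b)) • v 1 + (c₀ * b ^ 2) • v 2 : Vn n)
          = c₀ • (((s₀ + ε * a) ^ 2) • v 0 + ((s₀ + ε * a) * (t₀ + ε * b)) • v 1
              + ((t₀ + ε * b) ^ 2) • v 2 : Vn n) := by
        rw [hrx]
        funext i
        simp only [Pi.add_apply, Pi.smul_apply, smul_eq_mul]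
        ring
      rw [hcurve, eval_smul_homog hhom, hvanish, mul_zero]
    have h := chain _ _ hvan
    rw [expandg] at h
    exact h
  have eq3 : 2 * s₀ * A + t₀ * B = 0 := by
    have h := keyab 1 0
    have h' : c₀ * (2 * s₀ * A + t₀ * B) = 0 := by linear_combination h
    exact (mul_eq_zero.mp h').resolve_left hc₀
  have eq4 : s₀ * B + 2 * t₀ * D = 0 := by
    have h := keyab 0 1
    have h' : c₀ * (s₀ * B + 2 * t₀ * D) = 0 := by linear_combination h
    exact (mul_eq_zero.mp h').resolve_left hc₀
  have eq2 : s₁ ^ 2 * A + s₁ * t₁ * B + t₁ ^ 2 * D = 0 := by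
    rw [mem_embTangent_iff, hry, hsm, expandg] at hyT
    have h' : c₁ * (s₁ ^ 2 * A + s₁ * t₁ * B + t₁ ^ 2 * D) = 0 := by linear_combination hyT
    exact (mul_eq_zero.mp h').resolve_left hc₁
  have hΔ : s₀ * t₁ - s₁ * t₀ ≠ 0 := by
    intro hδ'
    have hδ : s₀ * t₁ = s₁ * t₀ := by linear_combination hδ'
    apply hxy
    rcases eq_or_ne t₀ 0 with ht₀ | ht₀
    · have hs₀ : s₀ ≠ 0 := fun h => hst₀ ⟨h, ht₀⟩
      have ht₁ : t₁ = 0 := by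
        have := hδ
        rw [ht₀, mul_zero] at this
        rcases mul_eq_zero.mp this with h | h
        · exact absurd h hs₀
        · exact h
      have hs₁ : s₁ ≠ 0 := fun h => hst₁ ⟨h, ht₁⟩
      refine pr_eq_of_rep_smul x y (c₁ * s₁ ^ 2 / (c₀ * s₀ ^ 2)) ?_ ?_
      · apply div_ne_zero (mul_ne_zero hc₁ (pow_ne_zero 2 hs₁))
          (mul_ne_zero hc₀ (pow_ne_zero 2 hs₀))
      · rw [hry, hrx, ht₀, ht₁]
        funext i
        simp only [Pi.add_apply, Pi.smul_apply, smul_eq_mul]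
        field_simp
        ring
    · have ht₁ : t₁ ≠ 0 := by
        intro h
        rw [h, mul_zero] at hδ
        rcases mul_eq_zero.mp hδ.symm with h' | h'
        · exact hst₁ ⟨h', h⟩
        · exact ht₀ h'
      refine pr_eq_of_rep_smul x y (c₁ * t₁ ^ 2 / (c₀ * t₀ ^ 2)) ?_ ?_
      · apply div_ne_zero (mul_ne_zero hc₁ (pow_ne_zero 2 ht₁))
          (mul_ne_zero hc₀ (pow_ne_zero 2 ht₀))
      · rw [hry, hrx]
        funext i
        simp only [Pi.add_apply, Pi.smul_apply, smul_eq_mul]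
        rw [div_mul_eq_mul_div, eq_div_iff (mul_ne_zero hc₀ (pow_ne_zero 2 ht₀))]
        linear_combination (-(c₀ * c₁ * (v 0 i * (s₁ * t₀ + s₀ * t₁) + v 1 i * t₀ * t₁))) * hδ
  have hA0 : A = 0 := by
    have h : A * (s₀ * t₁ - s₁ * t₀) ^ 2 = 0 := by
      linear_combination t₀ ^ 2 * eq2 + ((s₀ * t₁ ^ 2 - 2 * s₁ * t₀ * t₁) / 2) * eq3
        + (-(t₀ * t₁ ^ 2) / 2) * eq4
    exact (mul_eq_zero.mp h).resolve_right (pow_ne_zero 2 hΔ)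
  have hD0 : D = 0 := by
    have h : D * (s₀ * t₁ - s₁ * t₀) ^ 2 = 0 := by
      linear_combination s₀ ^ 2 * eq2 + (-(s₀ * s₁ ^ 2) / 2) * eq3
        + ((s₁ ^ 2 * t₀ - 2 * s₀ * s₁ * t₁) / 2) * eq4
    exact (mul_eq_zero.mp h).resolve_right (pow_ne_zero 2 hΔ)
  have hB0 : B = 0 := by
    rcases eq_or_ne t₀ 0 with ht₀ | ht₀
    · have hs₀ : s₀ ≠ 0 := fun h => hst₀ ⟨h, ht₀⟩
      have h : s₀ * B = 0 := by linear_combination eq4 - 2 * t₀ * hD0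
      exact (mul_eq_zero.mp h).resolve_left hs₀
    · have h : t₀ * B = 0 := by linear_combination eq3 - 2 * s₀ * hA0
      exact (mul_eq_zero.mp h).resolve_left ht₀
  intro p hp
  obtain ⟨s, t, hst, c, hc, hrp⟩ := hp
  rw [mem_embTangent_iff, hrp, hsm, expandg, hA0, hB0, hD0]
  ring

end
end
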